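/- Let E be a nonempty finite set. Let Q : E × E → ℝ be a transition rate matrix, i.e. Q(x,y) ≥ 0 for all x ≠ y and Σ_y Q(x,y) = 0 for all x. Let π : E → ℝ be a probability vector with π(x) > 0 for all x, let μ : E → ℝ be a probability vector, and let C ∈ ℝ be such that κ(x) := ( (πQ)(x) + C μ(x) ) / π(x) ≥ 0 for all x ∈ E, where (πQ)(x) := Σ_y π(y) Q(y,x). Define the matrix L : E × E → ℝ by L(x,y) := Q(x,y) + κ(x)·(μ(y) − 1{x = y}). Then Σ_x π(x) L(x,y) = 0 for every y ∈ E, and consequently π · exp(tL) = π (as row vectors, with exp the matrix exponential) for every t ≥ 0. -/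

import Mathlib

open Matrix

/-- **π-invariance of the finite-state jump-process Restore sampler (Theorem 3.8).**
Let `Q` be a transition rate matrix on a finite state space `E`, `π` a positive probability
vector, `μ` a probability vector and `C` a constant such that
`κ x = ((πQ) x + C μ x)/π x ≥ 0` for all `x`.  Let
`L x y = Q x y + κ x (μ y - 1{x = y})` be the generator of the Restore process.  Then
`π L = 0` (as a row vector), and consequently `π · exp(tL) = π` for all `t ≥ 0`. -/
theorem finite_jump_restore_invariant
    {E : Type*} [Fintype E] [DecidableEq E] [Nonempty E]
    (Q : Matrix E E ℝ)
    (hQoff : ∀ x y, x ≠ y → 0 ≤ Q x y)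
    (hQrow : ∀ x, ∑ y, Q x y = 0)
    (π μ : E → ℝ)
    (hπpos : ∀ x, 0 < π x) (hπsum : ∑ x, π x = 1)
    (hμnonneg : ∀ x, 0 ≤ μ x) (hμsum : ∑ x, μ x = 1)
    (C : ℝ)
    (κ : E → ℝ) (hκ : ∀ x, κ x = ((∑ y, π y * Q y x) + C * μ x) / π x)
    (hκnonneg : ∀ x, 0 ≤ κ x)
    (L : Matrix E E ℝ)
    (hL : ∀ x y, L x y = Q x y + κ x * (μ y - if x = y then 1 else 0)) :
    (∀ y, ∑ x, π x * L x y = 0) ∧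
    (∀ t : ℝ, 0 ≤ t → ∀ y, ∑ x, π x * NormedSpace.exp (t • L) x y = π y) := by
  -- π x * κ x = (πQ)(x) + C μ x
  have hπκ : ∀ x, π x * κ x = (∑ z, π z * Q z x) + C * μ x := by
    intro x
    rw [hκ]
    field_simp [(hπpos x).ne']
  -- ∑ x, π x * κ x = C
  have hκsum : ∑ x, π x * κ x = C := by
    simp_rw [hπκ]
    rw [Finset.sum_add_distrib]
    have h1 : ∑ x, ∑ z, π z * Q z x = 0 := by
      rw [Finset.sum_comm]
      simp_rw [← Finset.mul_sum, hQrow, mul_zero, Finset.sum_const_zero]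
    have h2 : ∑ x, C * μ x = C := by
      rw [← Finset.mul_sum, hμsum, mul_one]
    rw [h1, h2, zero_add]
  -- Part 1 : πL = 0
  have key : ∀ y, ∑ x, π x * L x y = 0 := by
    intro y
    have : ∀ x, π x * L x y
        = π x * Q x y + (π x * κ x) * μ y - (if x = y then π x * κ x else 0) := by
      intro x
      rw [hL]
      by_cases hxy : x = y <;> simp [hxy] <;> ring
    simp_rw [this]
    rw [Finset.sum_sub_distrib, Finset.sum_add_distrib, Finset.sum_ite_eq' Finset.univ y,
      if_pos (Finset.mem_univ y), ← Finset.sum_mul, hκsum, hπκ y]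
    ring
  refine ⟨key, ?_⟩
  -- Part 2 : π exp(tL) = π
  intro t ht y
  -- the matrix whose every row is π
  set P : Matrix E E ℝ := Matrix.of (fun _ z => π z) with hP
  have hPL : P * L = 0 := by
    ext x z
    simp only [Matrix.mul_apply, hP, Matrix.of_apply, Matrix.zero_apply]
    exact key z
  -- P * (t•L)^n = 0 for n ≥ 1
  have hPpow : ∀ n : ℕ, P * (t • L) ^ (n + 1) = 0 := by
    intro n
    induction n with
    | zero => simp [pow_one, Matrix.mul_smul, hPL]
    | succ m ih =>
        rw [pow_succ, ← Matrix.mul_assoc, ih, Matrix.zero_mul]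
  letI : SeminormedRing (Matrix E E ℝ) := Matrix.linftyOpSemiNormedRing
  letI : NormedRing (Matrix E E ℝ) := Matrix.linftyOpNormedRing
  letI : NormedAlgebra ℝ (Matrix E E ℝ) := Matrix.linftyOpNormedAlgebra
  have hsum : HasSum (fun n : ℕ => ((Nat.factorial n : ℝ))⁻¹ • (t • L) ^ n)
      (NormedSpace.exp (t • L)) := by
    rw [NormedSpace.exp_eq_tsum ℝ]
    exact (NormedSpace.expSeries_summable' (𝕂 := ℝ) (t • L)).hasSum
  have hmap : HasSum (fun n : ℕ => P * (((Nat.factorial n : ℝ))⁻¹ • (t • L) ^ n))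
      (P * NormedSpace.exp (t • L)) :=
    hsum.map (ContinuousLinearMap.mul ℝ (Matrix E E ℝ) P) (by fun_prop)
  have hterm : (fun n : ℕ => P * (((Nat.factorial n : ℝ))⁻¹ • (t • L) ^ n))
      = fun n : ℕ => if n = 0 then P else 0 := by
    funext n
    cases n with
    | zero => simp
    | succ m =>
        simp only [Nat.succ_ne_zero, if_false, Matrix.mul_smul, hPpow m, smul_zero]
  rw [hterm] at hmap
  have hP' : HasSum (fun n : ℕ => if n = 0 then P else 0) P := by
    simpa [eq_comm] using hasSum_ite_eq (0 : ℕ) P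
  have hfin : P * NormedSpace.exp (t • L) = P := hmap.unique hP'
  have := congrFun (congrFun hfin (Classical.arbitrary E)) y
  simpa [Matrix.mul_apply, hP] using this
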